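/- arXiv:nlin/0701013 — 4 statements merged into one kernel-verified Lean document; each statement's English description precedes it below -/
import Mathlib

section
/- For every n ≥ 1, the sum p_n^{(1)} = Σ_{i=1}^{n} |β_i^{(1)}| satisfies p_n^{(1)} = k(k+1)/2 - (1/2)⌊(k+1)/3⌋ - (3/2)⌊(k+1)/3⌋², where k = |β_n^{(1)}|. -/
theorem p1_degree_formula
    (β : ℕ → ℤ)
    (hβ : ∀ n : ℕ, β n = (-1 : ℤ)^n * (3 * (((n + 1) / 2 : ℕ) : ℤ) - 1 + (-1 : ℤ)^n))
    (n : ℕ) (hn : 1 ≤ n) :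
    ((∑ i ∈ Finset.Icc 1 n, |β i| : ℤ) : ℚ)
      = (|β n| : ℚ) * (|β n| + 1) / 2
        - (1 / 2) * (((|β n| + 1) / 3 : ℤ) : ℚ)
        - (3 / 2) * (((|β n| + 1) / 3 : ℤ) : ℚ)^2 := by
  have habs : ∀ k : ℕ, |β k| = 3 * ((k / 2 : ℕ) : ℤ) + ((k % 2 : ℕ) : ℤ) := by
    intro k
    rcases Nat.even_or_odd k with ⟨m, hm⟩ | ⟨m, hm⟩
    · subst hm
      rw [hβ]
      have h1 : (m + m + 1) / 2 = m := by omega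
      have h2 : (m + m) / 2 = m := by omega
      have h3 : (m + m) % 2 = 0 := by omega
      rw [h1, h2, h3, Even.neg_one_pow ⟨m, rfl⟩]
      push_cast
      rw [show (1 : ℤ) * (3 * (m : ℤ) - 1 + 1) = 3 * (m : ℤ) by ring,
        abs_of_nonneg (by positivity)]
      ring
    · subst hm
      rw [hβ]
      have h1 : (2 * m + 1 + 1) / 2 = m + 1 := by omega
      have h2 : (2 * m + 1) / 2 = m := by omega
      have h3 : (2 * m + 1) % 2 = 1 := by omega
      rw [h1, h2, h3]
      have : (-1 : ℤ) ^ (2 * m + 1) = -1 := by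
        rw [pow_succ, pow_mul]; simp
      rw [this]
      push_cast
      rw [show (-1 : ℤ) * (3 * ((m : ℤ) + 1) - 1 + -1) = -(3 * (m : ℤ) + 1) by ring,
        abs_neg, abs_of_nonneg (by positivity)]
  have hsum : ∀ k : ℕ, (∑ i ∈ Finset.Icc 1 k, |β i|)
      = 3 * ((k / 2 : ℕ) : ℤ) ^ 2 + ((k / 2 : ℕ) : ℤ)
        + ((k % 2 : ℕ) : ℤ) * (3 * ((k / 2 : ℕ) : ℤ) + 1) := by
    intro k
    induction k with
    | zero => simp
    | succ k ih =>
      rw [Finset.sum_Icc_succ_top (by omega), ih, habs]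
      rcases Nat.even_or_odd k with ⟨m, hm⟩ | ⟨m, hm⟩
      · subst hm
        have h1 : (m + m) / 2 = m := by omega
        have h2 : (m + m) % 2 = 0 := by omega
        have h3 : (m + m + 1) / 2 = m := by omega
        have h4 : (m + m + 1) % 2 = 1 := by omega
        rw [h1, h2, h3, h4]
        push_cast
        ring
      · subst hm
        have h1 : (2 * m + 1) / 2 = m := by omega
        have h2 : (2 * m + 1) % 2 = 1 := by omega
        have h3 : (2 * m + 1 + 1) / 2 = m + 1 := by omega
        have h4 : (2 * m + 1 + 1) % 2 = 0 := by omega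
        rw [h1, h2, h3, h4]
        push_cast
        ring
  have hdiv : ((|β n| + 1) / 3 : ℤ) = ((n / 2 : ℕ) : ℤ) := by
    rw [habs n]
    omega
  rw [hsum, hdiv, ← Int.cast_abs, habs n]
  rcases Nat.even_or_odd n with ⟨m, hm⟩ | ⟨m, hm⟩
  · subst hm
    have h1 : (m + m) / 2 = m := by omega
    have h2 : (m + m) % 2 = 0 := by omega
    rw [h1, h2]
    push_cast
    field_simp
    ring
  · subst hm
    have h1 : (2 * m + 1) / 2 = m := by omega
    have h2 : (2 * m + 1) % 2 = 1 := by omega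
    rw [h1, h2]
    push_cast
    field_simp
    ring
end

section
/- For every n ≥ 1, the sum p_n^{(2)} = Σ_{i=1}^{n} |β_i^{(2)}| satisfies p_n^{(2)} = k(k+1)/2 + (1/2)⌊(k+2)/3⌋ - (3/2)⌊(k+2)/3⌋², where k = |β_n^{(2)}|. -/
theorem p2_degree_formula
    (β : ℕ → ℤ)
    (hβ : ∀ n : ℕ, β n = (-1 : ℤ)^(n + 1) * (3 * ((n / 2 : ℕ) : ℤ) + 1 + (-1 : ℤ)^(n + 1)))
    (n : ℕ) (hn : 1 ≤ n) :
    ((∑ i ∈ Finset.Icc 1 n, |β i| : ℤ) : ℚ)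
      = (|β n| : ℚ) * (|β n| + 1) / 2
        + (1 / 2) * (((|β n| + 2) / 3 : ℤ) : ℚ)
        - (3 / 2) * (((|β n| + 2) / 3 : ℤ) : ℚ)^2 := by
  have hodd : ∀ m : ℕ, |β (2*m+1)| = 3*(m:ℤ)+2 := by
    intro m
    rw [hβ]
    have h2 : ((2*m+1)/2 : ℕ) = m := by omega
    have hp : (-1:ℤ)^(2*m+1+1) = 1 := by
      rw [show 2*m+1+1 = 2*(m+1) by ring, pow_mul]; norm_num
    rw [h2, hp, one_mul, abs_of_nonneg (by positivity)]
    ring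
  have heven : ∀ m : ℕ, |β (2*m+2)| = 3*(m:ℤ)+3 := by
    intro m
    rw [hβ]
    have h2 : ((2*m+2)/2 : ℕ) = m+1 := by omega
    have hp : (-1:ℤ)^(2*m+2+1) = -1 := by
      rw [show 2*m+2+1 = 2*(m+1)+1 by ring, pow_succ, pow_mul]; norm_num
    rw [h2, hp]
    push_cast
    rw [show (-1:ℤ) * (3*((m:ℤ)+1)+1+(-1)) = -(3*(m:ℤ)+3) by ring, abs_neg,
      abs_of_nonneg (by positivity)]
  have hsum : ∀ m : ℕ,
      (∑ i ∈ Finset.Icc 1 (2*m+1), |β i|) = 3*(m:ℤ)^2+5*m+2 ∧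
      (∑ i ∈ Finset.Icc 1 (2*m+2), |β i|) = 3*(m:ℤ)^2+8*m+5 := by
    intro m
    induction m with
    | zero =>
      constructor
      · simpa using hodd 0
      · rw [show 2*0+2 = 1+1 by ring, Finset.sum_Icc_succ_top (by omega)]
        have h1 := hodd 0
        have h2 := heven 0
        norm_num at h1 h2 ⊢
        rw [h1, h2]; norm_num
    | succ k ih =>
      have h1 : (∑ i ∈ Finset.Icc 1 (2*(k+1)+1), |β i|) = 3*((k:ℤ)+1)^2+5*(k+1)+2 := by
        rw [show 2*(k+1)+1 = (2*k+2)+1 by ring, Finset.sum_Icc_succ_top (by omega), ih.2]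
        have := hodd (k+1)
        rw [show 2*(k+1)+1 = (2*k+2)+1 by ring] at this
        rw [this]
        push_cast
        ring
      constructor
      · rw [h1]; push_cast; ring
      · rw [show 2*(k+1)+2 = (2*(k+1)+1)+1 by ring, Finset.sum_Icc_succ_top (by omega), h1]
        have := heven (k+1)
        rw [show 2*(k+1)+2 = (2*(k+1)+1)+1 by ring] at this
        rw [this]
        push_cast
        ring
  rcases Nat.even_or_odd n with ⟨m, hm⟩ | ⟨m, hm⟩
  · -- n = 2*m, m ≥ 1, so n = 2*(m-1)+2
    obtain ⟨j, rfl⟩ : ∃ j, m = j + 1 := ⟨m - 1, by omega⟩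
    have hne : n = 2*j+2 := by omega
    subst hne
    rw [(hsum j).2, ← Int.cast_abs, heven j]
    have hdiv : ((3*(j:ℤ)+3+2)/3 : ℤ) = j+1 := by omega
    rw [hdiv]
    push_cast
    ring
  · have hne : n = 2*m+1 := by omega
    subst hne
    rw [(hsum m).1, ← Int.cast_abs, hodd m]
    have hdiv : ((3*(m:ℤ)+2+2)/3 : ℤ) = m+1 := by omega
    rw [hdiv]
    push_cast
    ring
end

section
/- The rational function w(z) = 3(z⁵ - 24)/(z(z⁵ + 36)) satisfies, for all z with z ≠ 0 and z⁵ + 36 ≠ 0, the fourth-order equation w'''' + 5 w' w'' - 5 w² w'' - 5 w (w')² + w⁵ - z w - β = 0 with β = -3. -/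
noncomputable section

def K2d (z : ℝ) : ℝ := z^6 + 36*z
def K2N0 (z : ℝ) : ℝ := 3*z^5 - 72
def K2N1 (z : ℝ) : ℝ := -3*z^10 + 864*z^5 + 2592
def K2N2 (z : ℝ) : ℝ := 6*z^15 - 6912*z^10 + 62208*z^5 - 186624
def K2N3 (z : ℝ) : ℝ := -18*z^20 + 57888*z^15 - 2550528*z^10 + 7838208*z^5 + 20155392
def K2N4 (z : ℝ) : ℝ := 72*z^25 - 531360*z^20 + 58631040*z^15 - 699840000*z^10
    - 201553920*z^5 - 2902376448

lemma K2polyHD (a b c e f g z : ℝ) :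
    HasDerivAt (fun x : ℝ => a*x^25 + b*x^20 + c*x^15 + e*x^10 + f*x^5 + g)
      (25*a*z^24 + 20*b*z^19 + 15*c*z^14 + 10*e*z^9 + 5*f*z^4) z := by
  have h : ∀ (n : ℕ) (c : ℝ), HasDerivAt (fun x : ℝ => c*x^n) (c*((n:ℝ)*z^(n-1))) z := by
    intro n c
    simpa [mul_comm] using (hasDerivAt_pow n z).const_mul c
  have := ((((((h 25 a).add (h 20 b)).add (h 15 c)).add (h 10 e)).add (h 5 f)).add_const g)
  refine this.congr_deriv ?_
  norm_num
  ring

lemma K2dHD (z : ℝ) : HasDerivAt K2d (6*z^5 + 36) z := by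
  have h1 : HasDerivAt (fun x : ℝ => x^6) ((6:ℝ)*z^5) z := by
    simpa using hasDerivAt_pow 6 z
  have h2 : HasDerivAt (fun x : ℝ => 36*x) (36:ℝ) z := by
    simpa using (hasDerivAt_id z).const_mul (36:ℝ)
  exact h1.add h2

lemma K2step0 (z : ℝ) (hz : K2d z ≠ 0) :
    HasDerivAt (fun x => K2N0 x / (K2d x)^1) (K2N1 z / (K2d z)^2) z := by
  have hN : HasDerivAt K2N0 (15*z^4) z := by
    have h := K2polyHD 0 0 0 0 3 (-72) z
    have hfe : (fun x : ℝ => (0)*x^25 + (0)*x^20 + (0)*x^15 + (0)*x^10 + (3)*x^5 + ((-72))) = K2N0 := by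
      funext x; unfold K2N0; ring
    rw [hfe] at h
    convert h using 1; ring
  have hD : HasDerivAt (fun x => (K2d x)^1) ((1:ℕ) * (K2d z)^0 * (6*z^5+36)) z :=
    (K2dHD z).pow 1
  have h := hN.div hD (pow_ne_zero 1 hz)
  refine h.congr_deriv ?_
  simp only [K2N0, K2N1, K2d] at hz ⊢
  field_simp
  ring

lemma K2step1 (z : ℝ) (hz : K2d z ≠ 0) :
    HasDerivAt (fun x => K2N1 x / (K2d x)^2) (K2N2 z / (K2d z)^3) z := by
  have hN : HasDerivAt K2N1 (-30*z^9 + 4320*z^4) z := by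
    have h := K2polyHD 0 0 0 (-3) 864 2592 z
    have hfe : (fun x : ℝ => (0)*x^25 + (0)*x^20 + (0)*x^15 + ((-3))*x^10 + (864)*x^5 + (2592)) = K2N1 := by
      funext x; unfold K2N1; ring
    rw [hfe] at h
    convert h using 1; ring
  have hD : HasDerivAt (fun x => (K2d x)^2) ((2:ℕ) * (K2d z)^1 * (6*z^5+36)) z :=
    (K2dHD z).pow 2
  have h := hN.div hD (pow_ne_zero 2 hz)
  refine h.congr_deriv ?_
  simp only [K2N1, K2N2, K2d] at hz ⊢
  field_simp
  ring

lemma K2step2 (z : ℝ) (hz : K2d z ≠ 0) :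
    HasDerivAt (fun x => K2N2 x / (K2d x)^3) (K2N3 z / (K2d z)^4) z := by
  have hN : HasDerivAt K2N2 (90*z^14 - 69120*z^9 + 311040*z^4) z := by
    have h := K2polyHD 0 0 6 (-6912) 62208 (-186624) z
    have hfe : (fun x : ℝ => (0)*x^25 + (0)*x^20 + (6)*x^15 + ((-6912))*x^10 + (62208)*x^5 + ((-186624))) = K2N2 := by
      funext x; unfold K2N2; ring
    rw [hfe] at h
    convert h using 1; ring
  have hD : HasDerivAt (fun x => (K2d x)^3) ((3:ℕ) * (K2d z)^2 * (6*z^5+36)) z :=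
    (K2dHD z).pow 3
  have h := hN.div hD (pow_ne_zero 3 hz)
  refine h.congr_deriv ?_
  simp only [K2N2, K2N3, K2d] at hz ⊢
  field_simp
  ring

lemma K2step3 (z : ℝ) (hz : K2d z ≠ 0) :
    HasDerivAt (fun x => K2N3 x / (K2d x)^4) (K2N4 z / (K2d z)^5) z := by
  have hN : HasDerivAt K2N3 (-360*z^19 + 868320*z^14 - 25505280*z^9 + 39191040*z^4) z := by
    have h := K2polyHD 0 (-18) 57888 (-2550528) 7838208 20155392 z
    have hfe : (fun x : ℝ => (0)*x^25 + ((-18))*x^20 + (57888)*x^15 + ((-2550528))*x^10 + (7838208)*x^5 + (20155392)) = K2N3 := by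
      funext x; unfold K2N3; ring
    rw [hfe] at h
    convert h using 1; ring
  have hD : HasDerivAt (fun x => (K2d x)^4) ((4:ℕ) * (K2d z)^3 * (6*z^5+36)) z :=
    (K2dHD z).pow 4
  have h := hN.div hD (pow_ne_zero 4 hz)
  refine h.congr_deriv ?_
  simp only [K2N3, K2N4, K2d] at hz ⊢
  field_simp
  ring

theorem K2_first_member_beta_neg_three
    (w : ℝ → ℝ) (hw : ∀ z : ℝ, w z = 3 * (z^5 - 24) / (z * (z^5 + 36))) :
    ∀ z : ℝ, z ≠ 0 → z^5 + 36 ≠ 0 →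
      iteratedDeriv 4 w z + 5 * deriv w z * iteratedDeriv 2 w z
        - 5 * (w z)^2 * iteratedDeriv 2 w z - 5 * w z * (deriv w z)^2
        + (w z)^5 - z * w z - (-3) = 0 := by
  have hwfun : w = fun x => K2N0 x / (K2d x)^1 := by
    funext x
    rw [hw]
    simp only [K2N0, K2d, pow_one]
    rw [show x * (x^5 + 36) = x^6 + 36*x by ring, show 3*(x^5-24) = 3*x^5-72 by ring]
  have hS : IsOpen {y : ℝ | K2d y ≠ 0} := by
    have hc : Continuous K2d := by unfold K2d; continuity
    exact isOpen_compl_singleton.preimage hc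
  have h1 : ∀ y, K2d y ≠ 0 → deriv w y = K2N1 y / (K2d y)^2 := by
    intro y hy
    rw [hwfun]
    exact (K2step0 y hy).deriv
  have h2 : ∀ y, K2d y ≠ 0 → iteratedDeriv 2 w y = K2N2 y / (K2d y)^3 := by
    intro y hy
    rw [iteratedDeriv_succ, iteratedDeriv_one]
    have hev : deriv w =ᶠ[nhds y] (fun x => K2N1 x / (K2d x)^2) :=
      Filter.eventually_of_mem (hS.mem_nhds hy) (fun x hx => h1 x hx)
    rw [hev.deriv_eq]
    exact (K2step1 y hy).deriv
  have h3 : ∀ y, K2d y ≠ 0 → iteratedDeriv 3 w y = K2N3 y / (K2d y)^4 := by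
    intro y hy
    rw [iteratedDeriv_succ]
    have hev : iteratedDeriv 2 w =ᶠ[nhds y] (fun x => K2N2 x / (K2d x)^3) :=
      Filter.eventually_of_mem (hS.mem_nhds hy) (fun x hx => h2 x hx)
    rw [hev.deriv_eq]
    exact (K2step2 y hy).deriv
  have h4 : ∀ y, K2d y ≠ 0 → iteratedDeriv 4 w y = K2N4 y / (K2d y)^5 := by
    intro y hy
    rw [iteratedDeriv_succ]
    have hev : iteratedDeriv 3 w =ᶠ[nhds y] (fun x => K2N3 x / (K2d x)^4) :=
      Filter.eventually_of_mem (hS.mem_nhds hy) (fun x hx => h3 x hx)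
    rw [hev.deriv_eq]
    exact (K2step3 y hy).deriv
  intro z hz0 hz5
  have hz : K2d z ≠ 0 := by
    unfold K2d
    rw [show z^6 + 36*z = z*(z^5+36) by ring]
    exact mul_ne_zero hz0 hz5
  rw [h4 z hz, h2 z hz, h1 z hz, hw z]
  have hz' : z^6 + 36*z ≠ 0 := hz
  simp only [K2N0, K2N1, K2N2, K2N4, K2d]
  field_simp [hz0, hz5, hz']
  ring

end
end

section
/- The rational function w(z) = -5 z⁴ (z⁵ + 216) / ((z⁵ + 36)(z⁵ - 144)) satisfies, for all z with (z⁵+36)(z⁵-144) ≠ 0, the fourth-order equation w'''' + 5 w' w'' - 5 w² w'' - 5 w (w')² + w⁵ - z w - 5 = 0. -/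
lemma divPowHasDerivAt {p q : ℝ → ℝ} {dp dq : ℝ} (k : ℕ) {z : ℝ}
    (hp : HasDerivAt p dp z) (hq : HasDerivAt q dq z) (hqz : q z ≠ 0) :
    HasDerivAt (fun y => p y / (q y)^(k+1))
      ((dp * q z - (k+1) * p z * dq) / (q z)^(k+2)) z := by
  have hqp : HasDerivAt (fun y => (q y)^(k+1)) ((((k:ℝ)+1)) * (q z)^k * dq) z := by
    have := hq.fun_pow (k+1)
    simpa using this
  have h := hp.div hqp (pow_ne_zero _ hqz)
  refine h.congr_deriv (Eq.symm ?_)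
  rw [div_eq_div_iff (pow_ne_zero _ hqz) (pow_ne_zero _ (pow_ne_zero _ hqz))]
  ring

lemma hn0poly (z : ℝ) : HasDerivAt (fun y : ℝ => (-5:ℝ)*y^9 + (-1080:ℝ)*y^4) ((-45:ℝ)*z^8 + (-4320:ℝ)*z^3) z := by
  have h := (((hasDerivAt_pow 9 z).const_mul ((-5:ℝ))).add ((hasDerivAt_pow 4 z).const_mul ((-1080:ℝ))))
  refine h.congr_deriv (Eq.symm ?_)
  push_cast
  ring

lemma hn1poly (z : ℝ) : HasDerivAt (fun y : ℝ => (5:ℝ)*y^18 + (8640:ℝ)*y^13 + (116640:ℝ)*y^8 + (22394880:ℝ)*y^3) ((90:ℝ)*z^17 + (112320:ℝ)*z^12 + (933120:ℝ)*z^7 + (67184640:ℝ)*z^2) z := by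
  have h := (((((hasDerivAt_pow 18 z).const_mul ((5:ℝ))).add ((hasDerivAt_pow 13 z).const_mul ((8640:ℝ)))).add ((hasDerivAt_pow 8 z).const_mul ((116640:ℝ)))).add ((hasDerivAt_pow 3 z).const_mul ((22394880:ℝ))))
  refine h.congr_deriv (Eq.symm ?_)
  push_cast
  ring

lemma hn2poly (z : ℝ) : HasDerivAt (fun y : ℝ => (-10:ℝ)*y^27 + (-64800:ℝ)*y^22 + (-4665600:ℝ)*y^17 + (-937785600:ℝ)*y^12 + (12093235200:ℝ)*y^7 + (-348285173760:ℝ)*y^2) ((-270:ℝ)*z^26 + (-1425600:ℝ)*z^21 + (-79315200:ℝ)*z^16 + (-11253427200:ℝ)*z^11 + (84652646400:ℝ)*z^6 + (-696570347520:ℝ)*z^1) z := by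
  have h := (((((((hasDerivAt_pow 27 z).const_mul ((-10:ℝ))).add ((hasDerivAt_pow 22 z).const_mul ((-64800:ℝ)))).add ((hasDerivAt_pow 17 z).const_mul ((-4665600:ℝ)))).add ((hasDerivAt_pow 12 z).const_mul ((-937785600:ℝ)))).add ((hasDerivAt_pow 7 z).const_mul ((12093235200:ℝ)))).add ((hasDerivAt_pow 2 z).const_mul ((-348285173760:ℝ))))
  refine h.congr_deriv (Eq.symm ?_)
  push_cast
  ring

lemma hn3poly (z : ℝ) : HasDerivAt (fun y : ℝ => (30:ℝ)*y^36 + (531360:ℝ)*y^31 + (111041280:ℝ)*y^26 + (25278220800:ℝ)*y^21 + (-170816947200:ℝ)*y^16 + (78538306682880:ℝ)*y^11 + (-927831702896640:ℝ)*y^6 + (3611020681543680:ℝ)*y^1) ((1080:ℝ)*z^35 + (16472160:ℝ)*z^30 + (2887073280:ℝ)*z^25 + (530842636800:ℝ)*z^20 + (-2733071155200:ℝ)*z^15 + (863921373511680:ℝ)*z^10 + (-5566990217379840:ℝ)*z^5 + (3611020681543680:ℝ)*z^0) z := by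
  have h := (((((((((hasDerivAt_pow 36 z).const_mul ((30:ℝ))).add ((hasDerivAt_pow 31 z).const_mul ((531360:ℝ)))).add ((hasDerivAt_pow 26 z).const_mul ((111041280:ℝ)))).add ((hasDerivAt_pow 21 z).const_mul ((25278220800:ℝ)))).add ((hasDerivAt_pow 16 z).const_mul ((-170816947200:ℝ)))).add ((hasDerivAt_pow 11 z).const_mul ((78538306682880:ℝ)))).add ((hasDerivAt_pow 6 z).const_mul ((-927831702896640:ℝ)))).add ((hasDerivAt_pow 1 z).const_mul ((3611020681543680:ℝ))))
  refine h.congr_deriv (Eq.symm ?_)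
  push_cast
  ring

lemma hQpoly (z : ℝ) : HasDerivAt (fun y : ℝ => y^10 - 108*y^5 - 5184) (10*z^9 - 540*z^4) z := by
  have h := (((hasDerivAt_pow 10 z).sub ((hasDerivAt_pow 5 z).const_mul (108:ℝ))).sub_const (5184:ℝ))
  refine h.congr_deriv (Eq.symm ?_)
  push_cast
  ring

theorem K2_first_member_beta_five
    (w : ℝ → ℝ) (hw : ∀ z : ℝ, w z = -5 * z^4 * (z^5 + 216) / ((z^5 + 36) * (z^5 - 144))) :
    ∀ z : ℝ, (z^5 + 36) * (z^5 - 144) ≠ 0 →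
      iteratedDeriv 4 w z + 5 * deriv w z * iteratedDeriv 2 w z
        - 5 * (w z)^2 * iteratedDeriv 2 w z - 5 * w z * (deriv w z)^2
        + (w z)^5 - z * w z - 5 = 0 := by
  have hwq : w = (fun y : ℝ => ((-5:ℝ)*y^9 + (-1080:ℝ)*y^4) / (y^10 - 108*y^5 - 5184)^1) := by
    funext y
    rw [hw y, pow_one]
    congr 1 <;> ring
  have hU : IsOpen {y : ℝ | y^10 - 108*y^5 - 5184 ≠ 0} := by
    have hc : Continuous fun y : ℝ => y^10 - 108*y^5 - 5184 := by continuity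
    exact hc.isOpen_preimage _ isOpen_compl_singleton
  have h1 : ∀ y : ℝ, y^10 - 108*y^5 - 5184 ≠ 0 → HasDerivAt w ((fun y : ℝ => ((5:ℝ)*y^18 + (8640:ℝ)*y^13 + (116640:ℝ)*y^8 + (22394880:ℝ)*y^3) / (y^10 - 108*y^5 - 5184)^2) y) y := by
    intro y hy
    have h := divPowHasDerivAt 0 (hn0poly y) (hQpoly y) hy
    rw [hwq]
    refine h.congr_deriv (Eq.symm ?_)
    push_cast
    ring
  have hd1 : ∀ y : ℝ, y^10 - 108*y^5 - 5184 ≠ 0 → deriv (w) y = (fun y : ℝ => ((5:ℝ)*y^18 + (8640:ℝ)*y^13 + (116640:ℝ)*y^8 + (22394880:ℝ)*y^3) / (y^10 - 108*y^5 - 5184)^2) y :=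
    fun y hy => (h1 y hy).deriv
  have h2 : ∀ y : ℝ, y^10 - 108*y^5 - 5184 ≠ 0 → HasDerivAt (deriv w) ((fun y : ℝ => ((-10:ℝ)*y^27 + (-64800:ℝ)*y^22 + (-4665600:ℝ)*y^17 + (-937785600:ℝ)*y^12 + (12093235200:ℝ)*y^7 + (-348285173760:ℝ)*y^2) / (y^10 - 108*y^5 - 5184)^3) y) y := by
    intro y hy
    have h := divPowHasDerivAt 1 (hn1poly y) (hQpoly y) hy
    have h' : HasDerivAt (fun y : ℝ => ((5:ℝ)*y^18 + (8640:ℝ)*y^13 + (116640:ℝ)*y^8 + (22394880:ℝ)*y^3) / (y^10 - 108*y^5 - 5184)^2) ((fun y : ℝ => ((-10:ℝ)*y^27 + (-64800:ℝ)*y^22 + (-4665600:ℝ)*y^17 + (-937785600:ℝ)*y^12 + (12093235200:ℝ)*y^7 + (-348285173760:ℝ)*y^2) / (y^10 - 108*y^5 - 5184)^3) y) y := by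
      refine h.congr_deriv (Eq.symm ?_)
      push_cast
      ring
    exact h'.congr_of_eventuallyEq
      (Filter.eventuallyEq_of_mem (hU.mem_nhds hy) (fun x hx => hd1 x hx))
  have hd2 : ∀ y : ℝ, y^10 - 108*y^5 - 5184 ≠ 0 → deriv (deriv w) y = (fun y : ℝ => ((-10:ℝ)*y^27 + (-64800:ℝ)*y^22 + (-4665600:ℝ)*y^17 + (-937785600:ℝ)*y^12 + (12093235200:ℝ)*y^7 + (-348285173760:ℝ)*y^2) / (y^10 - 108*y^5 - 5184)^3) y :=
    fun y hy => (h2 y hy).deriv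
  have h3 : ∀ y : ℝ, y^10 - 108*y^5 - 5184 ≠ 0 → HasDerivAt (deriv (deriv w)) ((fun y : ℝ => ((30:ℝ)*y^36 + (531360:ℝ)*y^31 + (111041280:ℝ)*y^26 + (25278220800:ℝ)*y^21 + (-170816947200:ℝ)*y^16 + (78538306682880:ℝ)*y^11 + (-927831702896640:ℝ)*y^6 + (3611020681543680:ℝ)*y^1) / (y^10 - 108*y^5 - 5184)^4) y) y := by
    intro y hy
    have h := divPowHasDerivAt 2 (hn2poly y) (hQpoly y) hy
    have h' : HasDerivAt (fun y : ℝ => ((-10:ℝ)*y^27 + (-64800:ℝ)*y^22 + (-4665600:ℝ)*y^17 + (-937785600:ℝ)*y^12 + (12093235200:ℝ)*y^7 + (-348285173760:ℝ)*y^2) / (y^10 - 108*y^5 - 5184)^3) ((fun y : ℝ => ((30:ℝ)*y^36 + (531360:ℝ)*y^31 + (111041280:ℝ)*y^26 + (25278220800:ℝ)*y^21 + (-170816947200:ℝ)*y^16 + (78538306682880:ℝ)*y^11 + (-927831702896640:ℝ)*y^6 + (3611020681543680:ℝ)*y^1) / (y^10 - 108*y^5 - 5184)^4) y) y := by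
      refine h.congr_deriv (Eq.symm ?_)
      push_cast
      ring
    exact h'.congr_of_eventuallyEq
      (Filter.eventuallyEq_of_mem (hU.mem_nhds hy) (fun x hx => hd2 x hx))
  have hd3 : ∀ y : ℝ, y^10 - 108*y^5 - 5184 ≠ 0 → deriv (deriv (deriv w)) y = (fun y : ℝ => ((30:ℝ)*y^36 + (531360:ℝ)*y^31 + (111041280:ℝ)*y^26 + (25278220800:ℝ)*y^21 + (-170816947200:ℝ)*y^16 + (78538306682880:ℝ)*y^11 + (-927831702896640:ℝ)*y^6 + (3611020681543680:ℝ)*y^1) / (y^10 - 108*y^5 - 5184)^4) y :=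
    fun y hy => (h3 y hy).deriv
  have h4 : ∀ y : ℝ, y^10 - 108*y^5 - 5184 ≠ 0 → HasDerivAt (deriv (deriv (deriv w))) ((fun y : ℝ => ((-120:ℝ)*y^45 + (-4834080:ℝ)*y^40 + (-2191432320:ℝ)*y^35 + (-637632622080:ℝ)*y^30 + (-13597028997120:ℝ)*y^25 + (-5103292044165120:ℝ)*y^20 + (122053752862801920:ℝ)*y^15 + (-6022279741644472320:ℝ)*y^10 + (36269091725424721920:ℝ)*y^5 + (-18719531213122437120:ℝ)*y^0) / (y^10 - 108*y^5 - 5184)^5) y) y := by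
    intro y hy
    have h := divPowHasDerivAt 3 (hn3poly y) (hQpoly y) hy
    have h' : HasDerivAt (fun y : ℝ => ((30:ℝ)*y^36 + (531360:ℝ)*y^31 + (111041280:ℝ)*y^26 + (25278220800:ℝ)*y^21 + (-170816947200:ℝ)*y^16 + (78538306682880:ℝ)*y^11 + (-927831702896640:ℝ)*y^6 + (3611020681543680:ℝ)*y^1) / (y^10 - 108*y^5 - 5184)^4) ((fun y : ℝ => ((-120:ℝ)*y^45 + (-4834080:ℝ)*y^40 + (-2191432320:ℝ)*y^35 + (-637632622080:ℝ)*y^30 + (-13597028997120:ℝ)*y^25 + (-5103292044165120:ℝ)*y^20 + (122053752862801920:ℝ)*y^15 + (-6022279741644472320:ℝ)*y^10 + (36269091725424721920:ℝ)*y^5 + (-18719531213122437120:ℝ)*y^0) / (y^10 - 108*y^5 - 5184)^5) y) y := by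
      refine h.congr_deriv (Eq.symm ?_)
      push_cast
      ring
    exact h'.congr_of_eventuallyEq
      (Filter.eventuallyEq_of_mem (hU.mem_nhds hy) (fun x hx => hd3 x hx))
  intro z hz
  have hQz : (z^10 - 108*z^5 - 5184 : ℝ) ≠ 0 := by
    intro h; apply hz; linear_combination h
  have e2 : iteratedDeriv 2 w z = (fun y : ℝ => ((-10:ℝ)*y^27 + (-64800:ℝ)*y^22 + (-4665600:ℝ)*y^17 + (-937785600:ℝ)*y^12 + (12093235200:ℝ)*y^7 + (-348285173760:ℝ)*y^2) / (y^10 - 108*y^5 - 5184)^3) z := by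
    rw [iteratedDeriv_succ, iteratedDeriv_one]
    exact (h2 z hQz).deriv
  have e4 : iteratedDeriv 4 w z = (fun y : ℝ => ((-120:ℝ)*y^45 + (-4834080:ℝ)*y^40 + (-2191432320:ℝ)*y^35 + (-637632622080:ℝ)*y^30 + (-13597028997120:ℝ)*y^25 + (-5103292044165120:ℝ)*y^20 + (122053752862801920:ℝ)*y^15 + (-6022279741644472320:ℝ)*y^10 + (36269091725424721920:ℝ)*y^5 + (-18719531213122437120:ℝ)*y^0) / (y^10 - 108*y^5 - 5184)^5) z := by
    rw [iteratedDeriv_succ, iteratedDeriv_succ, iteratedDeriv_succ, iteratedDeriv_one]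
    exact (h4 z hQz).deriv
  have e1 : deriv w z = (fun y : ℝ => ((5:ℝ)*y^18 + (8640:ℝ)*y^13 + (116640:ℝ)*y^8 + (22394880:ℝ)*y^3) / (y^10 - 108*y^5 - 5184)^2) z := (h1 z hQz).deriv
  have e0 : w z = (fun y : ℝ => ((-5:ℝ)*y^9 + (-1080:ℝ)*y^4) / (y^10 - 108*y^5 - 5184)^1) z := by rw [hwq]
  rw [e2, e4, e1, e0]
  simp only []
  have hQ2 : ((z^10 - 108*z^5 - 5184:ℝ))^5 ≠ 0 := pow_ne_zero _ hQz
  set Q := (z^10 - 108*z^5 - 5184:ℝ) with hQ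
  field_simp
  rw [hQ]
  ring
end
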